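/- Let P and Q be probability distributions on a finite set Ω with Q(x) > 0 for all x, and suppose e^{−ε} ≤ P(x)/Q(x) ≤ e^{ε} for all x ∈ Ω, where ε > 0. Then for every α ∈ (1, ∞), D_α(P‖Q) ≤ (1/2)ε²α, where D_α(P‖Q) = (1/(α−1)) log ( Σ_x P(x)^α Q(x)^{1−α} ). -/

import Mathlib

open Real Set

lemma aux_sinh_le (t : ℝ) (ht : 0 ≤ t) : Real.sinh t ≤ t * Real.cosh t := by
  have hmono : MonotoneOn (fun s => s * Real.cosh s - Real.sinh s) (Ici 0) := by
    apply monotoneOn_of_deriv_nonneg (convex_Ici 0)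
    · fun_prop
    · intro x _
      exact (((hasDerivAt_id x).mul (Real.hasDerivAt_cosh x)).sub
        (Real.hasDerivAt_sinh x)).differentiableAt.differentiableWithinAt
    · intro x hx
      rw [interior_Ici] at hx
      have hd : HasDerivAt (fun s => s * Real.cosh s - Real.sinh s)
          (1 * Real.cosh x + x * Real.sinh x - Real.cosh x) x :=
        ((hasDerivAt_id x).mul (Real.hasDerivAt_cosh x)).sub (Real.hasDerivAt_sinh x)
      rw [hd.deriv]
      have hx0 : (0:ℝ) < x := hx
      have hs : 0 < Real.sinh x := Real.sinh_pos_iff.mpr hx0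
      nlinarith [mul_pos hx0 hs]
  have := hmono (self_mem_Ici) (mem_Ici.mpr ht) ht
  simpa using this

lemma aux_cosh_ratio (x y : ℝ) (hy : 0 ≤ y) (hxy : y ≤ x) :
    Real.cosh x ≤ Real.cosh y * Real.exp ((x ^ 2 - y ^ 2) / 2) := by
  have hanti : AntitoneOn (fun t => Real.log (Real.cosh t) - t ^ 2 / 2) (Ici 0) := by
    apply antitoneOn_of_deriv_nonpos (convex_Ici 0)
    · apply ContinuousOn.sub
      · exact (Real.continuous_cosh.continuousOn).log (fun t _ => (Real.cosh_pos t).ne')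
      · fun_prop
    · intro t _
      have hd : HasDerivAt (fun t => Real.log (Real.cosh t) - t ^ 2 / 2)
          (Real.sinh t / Real.cosh t - 2 * t ^ 1 / 2) t :=
        (((Real.hasDerivAt_cosh t).log (Real.cosh_pos t).ne')).sub
          (((hasDerivAt_pow 2 t)).div_const 2)
      exact hd.differentiableAt.differentiableWithinAt
    · intro t ht
      rw [interior_Ici] at ht
      have hd : HasDerivAt (fun t => Real.log (Real.cosh t) - t ^ 2 / 2)
          (Real.sinh t / Real.cosh t - 2 * t ^ 1 / 2) t :=
        (((Real.hasDerivAt_cosh t).log (Real.cosh_pos t).ne')).sub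
          (((hasDerivAt_pow 2 t)).div_const 2)
      rw [hd.deriv]
      have h1 := aux_sinh_le t (le_of_lt ht)
      have h2 : Real.sinh t / Real.cosh t ≤ t := by
        rw [div_le_iff₀ (Real.cosh_pos t)]; exact h1
      simp only [pow_one]
      linarith
  have h := hanti (mem_Ici.mpr hy) (mem_Ici.mpr (hy.trans hxy)) hxy
  simp only at h
  have hlog : Real.log (Real.cosh x) ≤ Real.log (Real.cosh y) + (x ^ 2 - y ^ 2) / 2 := by
    linarith
  calc Real.cosh x = Real.exp (Real.log (Real.cosh x)) := (Real.exp_log (Real.cosh_pos x)).symm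
    _ ≤ Real.exp (Real.log (Real.cosh y) + (x ^ 2 - y ^ 2) / 2) := Real.exp_le_exp.mpr hlog
    _ = Real.cosh y * Real.exp ((x ^ 2 - y ^ 2) / 2) := by
        rw [Real.exp_add, Real.exp_log (Real.cosh_pos y)]

set_option maxHeartbeats 1000000 in
theorem renyi_le_of_pure_dp {Ω : Type*} [Fintype Ω] (P Q : Ω → ℝ) (ε : ℝ) (hε : 0 < ε)
    (hP : ∀ x, 0 ≤ P x) (hQ : ∀ x, 0 < Q x)
    (hPsum : ∑ x, P x = 1) (hQsum : ∑ x, Q x = 1)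
    (hlo : ∀ x, Real.exp (-ε) ≤ P x / Q x) (hhi : ∀ x, P x / Q x ≤ Real.exp ε)
    (α : ℝ) (hα : 1 < α) :
    (1 / (α - 1)) * Real.log (∑ x, P x ^ α * Q x ^ (1 - α)) ≤ (1 / 2) * ε ^ 2 * α := by
  have hΩ : Nonempty Ω := by
    by_contra h
    rw [not_nonempty_iff] at h
    simp [Finset.univ_eq_empty] at hPsum
  set L : ℝ := Real.exp (-ε) with hLdef
  set U : ℝ := Real.exp ε with hUdef
  have hL : 0 < L := Real.exp_pos _
  have hU : 0 < U := Real.exp_pos _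
  have hLU : L < U := Real.exp_lt_exp.mpr (by linarith)
  have hUL : 0 < U - L := by linarith
  have hsum_eq : ∀ x, P x ^ α * Q x ^ (1 - α) = Q x * (P x / Q x) ^ α := by
    intro x
    rw [Real.div_rpow (hP x) (hQ x).le, Real.rpow_sub (hQ x), Real.rpow_one]
    field_simp
  have hpt : ∀ x, (P x / Q x) ^ α ≤
      ((U - P x / Q x) / (U - L)) * L ^ α + ((P x / Q x - L) / (U - L)) * U ^ α := by
    intro x
    have hr1 := hlo x
    have hr2 := hhi x
    have hconv := convexOn_rpow (le_of_lt hα)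
    have ha : (0:ℝ) ≤ (U - P x / Q x) / (U - L) := div_nonneg (by linarith) hUL.le
    have hb : (0:ℝ) ≤ (P x / Q x - L) / (U - L) := div_nonneg (by linarith) hUL.le
    have hab : (U - P x / Q x) / (U - L) + (P x / Q x - L) / (U - L) = 1 := by
      field_simp
      ring
    have hcomb : ((U - P x / Q x) / (U - L)) • L + ((P x / Q x - L) / (U - L)) • U
        = P x / Q x := by
      simp only [smul_eq_mul]
      field_simp
      ring
    have := hconv.2 (mem_Ici.mpr hL.le) (mem_Ici.mpr hU.le) ha hb hab
    rw [hcomb] at this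
    simpa using this
  have hQr : ∀ x, Q x * (P x / Q x) = P x := by
    intro x
    rw [mul_comm]
    exact div_mul_cancel₀ (P x) (hQ x).ne'
  have hsum_le : ∑ x, Q x * (P x / Q x) ^ α ≤
      ((U - 1) * L ^ α + (1 - L) * U ^ α) / (U - L) := by
    have h1 : ∑ x, Q x * (P x / Q x) ^ α ≤
        ∑ x, Q x * (((U - P x / Q x) / (U - L)) * L ^ α +
          ((P x / Q x - L) / (U - L)) * U ^ α) := by
      apply Finset.sum_le_sum
      intro x _
      exact mul_le_mul_of_nonneg_left (hpt x) (hQ x).le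
    refine h1.trans_eq ?_
    have key : ∀ (q r : ℝ), q * (((U - r) / (U - L)) * L ^ α + ((r - L) / (U - L)) * U ^ α)
        = ((U * q - q * r) * L ^ α + (q * r - L * q) * U ^ α) / (U - L) := by
      intro q r
      field_simp
    calc ∑ x, Q x * (((U - P x / Q x) / (U - L)) * L ^ α + ((P x / Q x - L) / (U - L)) * U ^ α)
        = ∑ x, ((U * Q x - P x) * L ^ α + (P x - L * Q x) * U ^ α) / (U - L) := by
          refine Finset.sum_congr rfl (fun x _ => ?_)
          rw [key (Q x) (P x / Q x), hQr x]
      _ = ((U - 1) * L ^ α + (1 - L) * U ^ α) / (U - L) := by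
          rw [← Finset.sum_div]
          congr 1
          rw [Finset.sum_add_distrib, ← Finset.sum_mul, ← Finset.sum_mul]
          simp only [Finset.sum_sub_distrib, ← Finset.mul_sum, hPsum, hQsum]
          ring
  set c : ℝ := (1 / 2) * ε ^ 2 * α with hc
  have hkey : ((U - 1) * L ^ α + (1 - L) * U ^ α) / (U - L) ≤ Real.exp ((α - 1) * c) := by
    set u : ℝ := Real.exp (ε / 2) with hu
    set v : ℝ := Real.exp (ε * (2 * α - 1) / 2) with hv
    have hu1 : 1 < u := by
      rw [hu]
      calc (1:ℝ) = Real.exp 0 := Real.exp_zero.symm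
        _ < Real.exp (ε / 2) := Real.exp_lt_exp.mpr (by linarith)
    have hv0 : 0 < v := Real.exp_pos _
    have hu0 : 0 < u := Real.exp_pos _
    have hUu : U = u ^ 2 := by
      rw [hUdef, hu, sq, ← Real.exp_add]
      norm_num
    have hLu : L = 1 / u ^ 2 := by
      rw [hLdef, hu, sq, ← Real.exp_add,
        show -ε = -(ε / 2 + ε / 2) by ring, Real.exp_neg, one_div]
    have hUα : U ^ α = u * v := by
      rw [hUdef, ← Real.exp_mul, hu, hv, ← Real.exp_add]
      congr 1
      ring
    have hLα : L ^ α = 1 / (u * v) := by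
      rw [hLdef, ← Real.exp_mul, hu, hv, ← Real.exp_add,
        show -ε * α = -(ε / 2 + ε * (2 * α - 1) / 2) by ring, Real.exp_neg, one_div]
    set K : ℝ := Real.exp ((α - 1) * c) with hK
    have hK0 : 0 < K := Real.exp_pos _
    have hcosh := aux_cosh_ratio (ε * (2 * α - 1) / 2) (ε / 2) (by positivity)
      (by nlinarith)
    have hexp_eq : ((ε * (2 * α - 1) / 2) ^ 2 - (ε / 2) ^ 2) / 2 = (α - 1) * c := by
      rw [hc]; ring
    rw [hexp_eq] at hcosh
    have h1 : Real.cosh (ε * (2 * α - 1) / 2) = (v + 1 / v) / 2 := by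
      rw [Real.cosh_eq, hv, Real.exp_neg, one_div]
    have h2 : Real.cosh (ε / 2) = (u + 1 / u) / 2 := by
      rw [Real.cosh_eq, hu, Real.exp_neg, one_div]
    rw [h1, h2] at hcosh
    have hcv : v + 1 / v ≤ (u + 1 / u) * K := by rw [hK]; linarith
    have hden : 0 < u ^ 2 - 1 / u ^ 2 := by
      rw [sub_pos, div_lt_iff₀ (by positivity)]
      have h2 : 1 < u ^ 2 := by nlinarith
      nlinarith [h2]
    rw [hUα, hLα, hUu, hLu, div_le_iff₀ hden]
    have hfac : 0 ≤ (u ^ 2 - 1) / u := div_nonneg (by nlinarith) hu0.le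
    have hmul := mul_le_mul_of_nonneg_left hcv hfac
    have heq2' : (u ^ 2 - 1) / u * (v + 1 / v)
        = (u ^ 2 - 1) * (1 / (u * v)) + (1 - 1 / u ^ 2) * (u * v) := by
      field_simp
      ring
    have heq3 : (u ^ 2 - 1) / u * ((u + 1 / u) * K) = K * (u ^ 2 - 1 / u ^ 2) := by
      field_simp
      ring
    calc (u ^ 2 - 1) * (1 / (u * v)) + (1 - 1 / u ^ 2) * (u * v)
        = (u ^ 2 - 1) / u * (v + 1 / v) := heq2'.symm
      _ ≤ (u ^ 2 - 1) / u * ((u + 1 / u) * K) := hmul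
      _ = K * (u ^ 2 - 1 / u ^ 2) := heq3
  have hEpos : 0 < ∑ x, P x ^ α * Q x ^ (1 - α) := by
    apply Finset.sum_pos _ Finset.univ_nonempty
    intro x _
    have hPx : 0 < P x := by
      have h0 : 0 < P x / Q x := lt_of_lt_of_le hL (hlo x)
      rcases div_pos_iff.mp h0 with ⟨h, _⟩ | ⟨_, h⟩
      · exact h
      · linarith [hQ x]
    exact mul_pos (Real.rpow_pos_of_pos hPx α) (Real.rpow_pos_of_pos (hQ x) _)
  have hle : ∑ x, P x ^ α * Q x ^ (1 - α) ≤ Real.exp ((α - 1) * c) := by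
    calc ∑ x, P x ^ α * Q x ^ (1 - α) = ∑ x, Q x * (P x / Q x) ^ α :=
          Finset.sum_congr rfl (fun x _ => hsum_eq x)
      _ ≤ ((U - 1) * L ^ α + (1 - L) * U ^ α) / (U - L) := hsum_le
      _ ≤ Real.exp ((α - 1) * c) := hkey
  have hlog : Real.log (∑ x, P x ^ α * Q x ^ (1 - α)) ≤ (α - 1) * c := by
    have := Real.log_le_log hEpos hle
    rwa [Real.log_exp] at this
  have hα1 : 0 < 1 / (α - 1) := div_pos one_pos (by linarith)
  calc (1 / (α - 1)) * Real.log (∑ x, P x ^ α * Q x ^ (1 - α))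
      ≤ (1 / (α - 1)) * ((α - 1) * c) := mul_le_mul_of_nonneg_left hlog hα1.le
    _ = c := by
        rw [← mul_assoc, one_div, inv_mul_cancel₀ (by linarith : α - 1 ≠ 0), one_mul]
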